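/- Let g(r) = (8r^4 + 4r^3 − 68r^2 − 174r − 144)/((r+3)^2 (r+1)^2). Then 4·∫_0^3 g(r) dr + e^{9/16}·∫_3^∞ e^{−r/2} r (r + 3/2) dr + 4·e^{9/16}·∫_3^∞ g(r) e^{−r/2} dr < 0. -/

import Mathlib

open Real MeasureTheory

/-- Antiderivative of `g` on `[0,3]`. -/
private noncomputable def Fg (r : ℝ) : ℝ :=
  8*r - 54*Real.log (r+3) - (153/2)*(r+3)⁻¹ - 6*Real.log (r+1) + (17/2)*(r+1)⁻¹

private lemma hasDerivAt_Fg {r : ℝ} (hr : 0 ≤ r) :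
    HasDerivAt Fg
      ((8*r^4 + 4*r^3 - 68*r^2 - 174*r - 144) / ((r+3)^2 * (r+1)^2)) r := by
  have h3 : r + 3 ≠ 0 := by positivity
  have h1 : r + 1 ≠ 0 := by positivity
  have d3 : HasDerivAt (fun x : ℝ => x + 3) 1 r := (hasDerivAt_id r).add_const 3
  have d1 : HasDerivAt (fun x : ℝ => x + 1) 1 r := (hasDerivAt_id r).add_const 1
  have dlog3 : HasDerivAt (fun x : ℝ => Real.log (x+3)) (1/(r+3)) r := by
    have h := (Real.hasDerivAt_log h3).comp r d3
    rw [mul_one] at h; rw [one_div]; exact h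
  have dlog1 : HasDerivAt (fun x : ℝ => Real.log (x+1)) (1/(r+1)) r := by
    have h := (Real.hasDerivAt_log h1).comp r d1
    rw [mul_one] at h; rw [one_div]; exact h
  have dinv3 : HasDerivAt (fun x : ℝ => (x+3)⁻¹) (-1/(r+3)^2) r := by
    exact d3.inv h3
  have dinv1 : HasDerivAt (fun x : ℝ => (x+1)⁻¹) (-1/(r+1)^2) r := by
    exact d1.inv h1
  have hid : HasDerivAt (fun x : ℝ => 8*x) 8 r := by
    simpa using (hasDerivAt_id r).const_mul (8:ℝ)
  have hF : HasDerivAt Fg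
      (8 - 54*(1/(r+3)) - (153/2)*(-1/(r+3)^2) - 6*(1/(r+1)) + (17/2)*(-1/(r+1)^2)) r := by
    exact (((hid.sub (dlog3.const_mul 54)).sub (dinv3.const_mul (153/2))).sub
      (dlog1.const_mul 6)).add (dinv1.const_mul (17/2))
  convert hF using 1
  field_simp
  ring

private lemma integral_first :
    (∫ r in (0:ℝ)..3,
      (8*r^4 + 4*r^3 - 68*r^2 - 174*r - 144) / ((r+3)^2 * (r+1)^2))
      = 243/8 - 66 * Real.log 2 := by
  have hderiv : ∀ r ∈ Set.uIcc (0:ℝ) 3, HasDerivAt Fg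
      ((8*r^4 + 4*r^3 - 68*r^2 - 174*r - 144) / ((r+3)^2 * (r+1)^2)) r := by
    intro r hr
    rw [Set.uIcc_of_le (by norm_num)] at hr
    exact hasDerivAt_Fg hr.1
  have hint : IntervalIntegrable
      (fun r => (8*r^4 + 4*r^3 - 68*r^2 - 174*r - 144) / ((r+3)^2 * (r+1)^2))
      volume 0 3 := by
    apply ContinuousOn.intervalIntegrable
    apply ContinuousOn.div
    · fun_prop
    · fun_prop
    · intro r hr
      rw [Set.uIcc_of_le (by norm_num)] at hr
      have : (0:ℝ) ≤ r := hr.1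
      positivity
  rw [intervalIntegral.integral_eq_sub_of_hasDerivAt hderiv hint]
  have h6 : Real.log 6 = Real.log 2 + Real.log 3 := by
    rw [show (6:ℝ) = 2 * 3 by norm_num, Real.log_mul (by norm_num) (by norm_num)]
  have h4 : Real.log 4 = 2 * Real.log 2 := by
    rw [show (4:ℝ) = 2 ^ 2 by norm_num, Real.log_pow]; push_cast; ring
  simp only [Fg]
  norm_num [h6, h4]
  ring

private lemma hasDerivAt_exp_half (x : ℝ) :
    HasDerivAt (fun r : ℝ => Real.exp (-r/2)) (Real.exp (-x/2) * (-1/2)) x := by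
  have hlin : HasDerivAt (fun r : ℝ => -r/2) (-1/2) x := by
    simpa using ((hasDerivAt_id x).neg).div_const (2:ℝ)
  exact (Real.hasDerivAt_exp (-x/2)).comp x hlin

private lemma tendsto_aux (n : ℕ) :
    Filter.Tendsto (fun r : ℝ => (r/2)^n * Real.exp (-(r/2)))
      Filter.atTop (nhds 0) :=
  (tendsto_pow_mul_exp_neg_atTop_nhds_zero n).comp
    (Filter.tendsto_id.atTop_div_const (by norm_num))

private lemma integral_second :
    (∫ r in Set.Ioi (3:ℝ), Real.exp (-r/2) * r * (r + 3/2)) = 73 * Real.exp (-3/2) := by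
  have key := integral_Ioi_of_hasDerivAt_of_nonneg
    (g := fun r : ℝ => -(Real.exp (-r/2) * (2*r^2 + 11*r + 22)))
    (g' := fun r : ℝ => Real.exp (-r/2) * r * (r + 3/2)) (a := 3) (l := 0)
    ?_ ?_ ?_ ?_
  · rw [key]; norm_num; ring
  · apply Continuous.continuousWithinAt; fun_prop
  · intro x hx
    have dp : HasDerivAt (fun r : ℝ => 2*r^2 + 11*r + 22) (4*x + 11) x := by
      have h1 : HasDerivAt (fun r : ℝ => r^2) (2*x) x := by simpa using hasDerivAt_pow 2 x
      have := ((h1.const_mul 2).add ((hasDerivAt_id x).const_mul 11)).add_const 22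
      refine this.congr_deriv ?_; ring
    have := ((hasDerivAt_exp_half x).mul dp).neg
    refine this.congr_deriv ?_; ring
  · intro x hx
    have hx0 : (0:ℝ) ≤ x := by linarith [hx.out]
    positivity
  · have comb := (((tendsto_aux 2).const_mul 8).add ((tendsto_aux 1).const_mul 22)).add
      ((tendsto_aux 0).const_mul 22)
    simp only [mul_zero, add_zero] at comb
    have comb' := comb.neg
    rw [neg_zero] at comb'
    convert comb' using 2 with r
    rw [neg_div]
    ring

private lemma integral_exp_half :
    (∫ r in Set.Ioi (3:ℝ), Real.exp (-r/2)) = 2 * Real.exp (-3/2) := by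
  have key := integral_Ioi_of_hasDerivAt_of_nonneg
    (g := fun r : ℝ => -(2 * Real.exp (-r/2)))
    (g' := fun r : ℝ => Real.exp (-r/2)) (a := 3) (l := 0)
    ?_ ?_ ?_ ?_
  · rw [key]; norm_num
  · apply Continuous.continuousWithinAt; fun_prop
  · intro x hx
    have := ((hasDerivAt_exp_half x).const_mul (2:ℝ)).neg
    refine this.congr_deriv ?_; ring
  · intro x _; positivity
  · have comb := ((tendsto_aux 0).const_mul 2).neg
    simp only [mul_zero, neg_zero, pow_zero, one_mul] at comb
    convert comb using 2 with r
    rw [neg_div]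

private lemma g_abs_le {r : ℝ} (hr : 3 ≤ r) :
    |(8*r^4 + 4*r^3 - 68*r^2 - 174*r - 144) / ((r+3)^2 * (r+1)^2)| ≤ 8 := by
  have hD : (0:ℝ) < (r+3)^2 * (r+1)^2 := by positivity
  rw [abs_div, abs_of_pos hD, div_le_iff₀ hD, abs_le]
  constructor
  · nlinarith [sq_nonneg r, sq_nonneg (r-3)]
  · nlinarith [sq_nonneg r, sq_nonneg (r-3)]

private lemma integrable_exp_half :
    IntegrableOn (fun r : ℝ => Real.exp (-r/2)) (Set.Ioi 3) := by
  have h := exp_neg_integrableOn_Ioi (3:ℝ) (b := 1/2) (by norm_num)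
  have heq : (fun r : ℝ => Real.exp (-r/2)) = fun x : ℝ => Real.exp (-(1/2) * x) := by
    funext r; congr 1; ring
  rw [heq]; exact h

theorem stmt0
    (g : ℝ → ℝ)
    (hg : ∀ r : ℝ, g r =
      (8*r^4 + 4*r^3 - 68*r^2 - 174*r - 144) / ((r+3)^2 * (r+1)^2)) :
    4 * (∫ r in (0:ℝ)..3, g r)
      + Real.exp (9/16) * (∫ r in Set.Ioi (3:ℝ), Real.exp (-r/2) * r * (r + 3/2))
      + 4 * Real.exp (9/16) * (∫ r in Set.Ioi (3:ℝ), g r * Real.exp (-r/2)) < 0 := by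
  have hgf : g = fun r : ℝ =>
      (8*r^4 + 4*r^3 - 68*r^2 - 174*r - 144) / ((r+3)^2 * (r+1)^2) := funext hg
  subst hgf
  rw [integral_first, integral_second]
  -- bound the third integral
  have hint8 : IntegrableOn (fun r : ℝ => 8 * Real.exp (-r/2)) (Set.Ioi 3) :=
    integrable_exp_half.const_mul 8
  have hintg : IntegrableOn (fun r : ℝ =>
      (8*r^4 + 4*r^3 - 68*r^2 - 174*r - 144) / ((r+3)^2 * (r+1)^2) * Real.exp (-r/2))
      (Set.Ioi 3) := by
    apply Integrable.mono hint8
    · apply ContinuousOn.aestronglyMeasurable _ measurableSet_Ioi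
      apply ContinuousOn.mul
      · apply ContinuousOn.div
        · fun_prop
        · fun_prop
        · intro r hr
          have : (3:ℝ) < r := hr
          positivity
      · fun_prop
    · filter_upwards [MeasureTheory.ae_restrict_mem measurableSet_Ioi] with r hr
      have hr3 : (3:ℝ) ≤ r := le_of_lt hr
      have he : (0:ℝ) < Real.exp (-r/2) := Real.exp_pos _
      rw [Real.norm_eq_abs, Real.norm_eq_abs, abs_mul, abs_of_pos he,
        abs_of_pos (by positivity : (0:ℝ) < 8 * Real.exp (-r/2))]
      have := g_abs_le hr3
      nlinarith
  have hI3 : (∫ r in Set.Ioi (3:ℝ),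
      (8*r^4 + 4*r^3 - 68*r^2 - 174*r - 144) / ((r+3)^2 * (r+1)^2) * Real.exp (-r/2))
      ≤ 16 * Real.exp (-3/2) := by
    have hmono := setIntegral_mono_on hintg hint8 measurableSet_Ioi (fun r hr => by
      have hr3 : (3:ℝ) ≤ r := le_of_lt hr
      have he : (0:ℝ) < Real.exp (-r/2) := Real.exp_pos _
      have := g_abs_le hr3
      have h8 : (8*r^4 + 4*r^3 - 68*r^2 - 174*r - 144) / ((r+3)^2 * (r+1)^2) ≤ 8 :=
        le_trans (le_abs_self _) this
      nlinarith)
    calc _ ≤ ∫ r in Set.Ioi (3:ℝ), 8 * Real.exp (-r/2) := hmono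
      _ = 8 * ∫ r in Set.Ioi (3:ℝ), Real.exp (-r/2) := integral_const_mul _ _
      _ = 16 * Real.exp (-3/2) := by rw [integral_exp_half]; ring
  -- numeric bounds
  have hE : Real.exp (9/16) * Real.exp (-3/2) = Real.exp (-15/16) := by
    rw [← Real.exp_add]; norm_num
  have hEexp : (38950081:ℝ)/16777216 ≤ Real.exp (15/16) := by
    have h1 : (15:ℝ)/64 + 1 ≤ Real.exp (15/64) := Real.add_one_le_exp _
    have h2 : ((79:ℝ)/64)^4 ≤ (Real.exp (15/64))^4 :=
      pow_le_pow_left₀ (by norm_num) (by linarith) 4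
    have h3 : Real.exp ((4:ℕ) * (15/64)) = (Real.exp (15/64))^4 := Real.exp_nat_mul _ 4
    have h4 : ((4:ℕ):ℝ) * (15/64) = 15/16 := by norm_num
    rw [h4] at h3
    rw [h3]
    calc (38950081:ℝ)/16777216 = ((79:ℝ)/64)^4 := by norm_num
      _ ≤ _ := h2
  have hEb : Real.exp (-15/16) ≤ (16777216:ℝ)/38950081 := by
    have hmul : Real.exp (-15/16) * Real.exp (15/16) = 1 := by
      rw [← Real.exp_add]; norm_num
    nlinarith [Real.exp_pos (-15/16 : ℝ), Real.exp_pos (15/16 : ℝ)]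
  have hL : (0.6931471803:ℝ) < Real.log 2 := Real.log_two_gt_d9
  have h2eq : Real.exp (9/16) * (73 * Real.exp (-3/2)) = 73 * Real.exp (-15/16) := by
    rw [← hE]; ring
  have h3le : 4 * Real.exp (9/16) *
      (∫ r in Set.Ioi (3:ℝ),
        (8*r^4 + 4*r^3 - 68*r^2 - 174*r - 144) / ((r+3)^2 * (r+1)^2) * Real.exp (-r/2))
      ≤ 64 * Real.exp (-15/16) := by
    have := mul_le_mul_of_nonneg_left hI3
      (show (0:ℝ) ≤ 4 * Real.exp (9/16) by positivity)
    calc _ ≤ 4 * Real.exp (9/16) * (16 * Real.exp (-3/2)) := this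
      _ = 64 * Real.exp (-15/16) := by rw [← hE]; ring
  rw [h2eq]
  linarith
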